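/- Galerkin orthogonality and Céa's lemma: if u ∈ V solves a(v,u) = ℓ(v) for all v ∈ V and u_h ∈ V_h ⊆ V solves a(v_h,u_h) = ℓ(v_h) for all v_h ∈ V_h, where a is continuous with constant C and coercive with constant α, then ‖u − u_h‖ ≤ (C/α) inf_{v_h ∈ V_h} ‖u − v_h‖. -/

import Mathlib

theorem cea_lemma
    (V : Type*) [NormedAddCommGroup V] [InnerProductSpace ℝ V] [CompleteSpace V]
    (Vh : Submodule ℝ V) (hVh : IsClosed (Vh : Set V))
    (a : V →ₗ[ℝ] V →ₗ[ℝ] ℝ)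
    (C : ℝ) (hcont : ∀ u v : V, |a u v| ≤ C * ‖u‖ * ‖v‖)
    (α : ℝ) (hα : 0 < α) (hcoer : ∀ v : V, α * ‖v‖ ^ 2 ≤ a v v)
    (ℓ : V →L[ℝ] ℝ)
    (u : V) (hu : ∀ v : V, a v u = ℓ v)
    (uh : V) (huh : uh ∈ Vh) (huhs : ∀ vh ∈ Vh, a vh uh = ℓ vh) :
    ‖u - uh‖ ≤ (C / α) * ⨅ vh : Vh, ‖u - (vh : V)‖ := by
  have hbdd : BddBelow (Set.range fun vh : Vh => ‖u - (vh : V)‖) := by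
    exact ⟨0, by rintro x ⟨vh, rfl⟩; positivity⟩
  have hne : Nonempty Vh := ⟨⟨uh, huh⟩⟩
  have hinf_nonneg : 0 ≤ ⨅ vh : Vh, ‖u - (vh : V)‖ :=
    le_ciInf fun vh => norm_nonneg _
  by_cases he : u - uh = 0
  · rw [he, norm_zero]
    have hle : (⨅ vh : Vh, ‖u - (vh : V)‖) ≤ ‖u - uh‖ := ciInf_le hbdd ⟨uh, huh⟩
    rw [he, norm_zero] at hle
    have : (⨅ vh : Vh, ‖u - (vh : V)‖) = 0 := le_antisymm hle hinf_nonneg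
    rw [this, mul_zero]
  · -- orthogonality: for wh ∈ Vh, a wh (u - uh) = 0
    have horth : ∀ wh ∈ Vh, a wh (u - uh) = 0 := by
      intro wh hwh
      rw [map_sub, hu wh, huhs wh hwh, sub_self]
    set e := u - uh with hedef
    have hepos : 0 < ‖e‖ := norm_pos_iff.mpr he
    -- key estimate: for all vh ∈ Vh, ‖e‖ ≤ (C/α) * ‖u - vh‖
    have hkey : ∀ vh : Vh, α * ‖e‖ ≤ C * ‖u - (vh : V)‖ := by
      intro vh
      have h1 : α * ‖e‖ ^ 2 ≤ a e e := hcoer e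
      have h2 : a e e = a (u - (vh : V)) e := by
        have : a ((vh : V) - uh) e = 0 := horth _ (Vh.sub_mem vh.2 huh)
        have hsplit : a e e = a (u - (vh : V)) e + a ((vh : V) - uh) e := by
          rw [← LinearMap.add_apply, ← map_add]
          congr 1
          rw [hedef]; congr 1; abel
        rw [hsplit, this, add_zero]
      have h3 : a (u - (vh : V)) e ≤ C * ‖u - (vh : V)‖ * ‖e‖ :=
        (le_abs_self _).trans (hcont _ _)
      have h4 : α * ‖e‖ ^ 2 ≤ C * ‖u - (vh : V)‖ * ‖e‖ := h1.trans (h2 ▸ h3)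
      have : α * ‖e‖ * ‖e‖ ≤ C * ‖u - (vh : V)‖ * ‖e‖ := by
        nlinarith [h4]
      exact le_of_mul_le_mul_right this hepos
    have hC : 0 < C := by
      have := hkey ⟨uh, huh⟩
      simp only [← hedef] at this
      nlinarith [hepos, this]
    -- ‖e‖ * α / C ≤ inf
    have : ‖e‖ * (α / C) ≤ ⨅ vh : Vh, ‖u - (vh : V)‖ := by
      apply le_ciInf
      intro vh
      rw [show ‖e‖ * (α / C) = ‖e‖ * α / C by ring, div_le_iff₀ hC]
      nlinarith [hkey vh]
    calc ‖e‖ = (C / α) * (‖e‖ * (α / C)) := by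
          field_simp
        _ ≤ (C / α) * ⨅ vh : Vh, ‖u - (vh : V)‖ := by
          apply mul_le_mul_of_nonneg_left this (by positivity)
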